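/- Under assumptions (H1) and (H2), every KKT point is an equilibrium of the vector field: if x ∈ Φ then F(x) = 0. -/
import Mathlib


open Matrix Set Filter

noncomputable section

/-- The gradient of `f : ℝⁿ → ℝ` at `x`, as the vector of partial derivatives. -/
def grad {n : ℕ} (f : (Fin n → ℝ) → ℝ) (x : Fin n → ℝ) : Fin n → ℝ :=
  fun j => fderiv ℝ f x (Pi.single j 1)

/-- The feasible set `S`. -/
def feas {n m k : ℕ} (h : Fin m → (Fin n → ℝ) → ℝ) (g : Fin k → (Fin n → ℝ) → ℝ) :
    Set (Fin n → ℝ) :=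
  {x | (∀ i, h i x = 0) ∧ (∀ j, g j x ≤ 0)}

/-- Jacobian of the equality constraints (rows `∇h_i(x)`). -/
def matA {n m : ℕ} (h : Fin m → (Fin n → ℝ) → ℝ) (x : Fin n → ℝ) :
    Matrix (Fin m) (Fin n) ℝ :=
  Matrix.of fun i => grad (h i) x

/-- Jacobian of the inequality constraints (rows `∇g_j(x)`). -/
def matB {n k : ℕ} (g : Fin k → (Fin n → ℝ) → ℝ) (x : Fin n → ℝ) :
    Matrix (Fin k) (Fin n) ℝ :=
  Matrix.of fun j => grad (g j) x

/-- `H(x) = I − Aᵀ(AAᵀ)⁻¹A`. -/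
def matH {n m : ℕ} (h : Fin m → (Fin n → ℝ) → ℝ) (x : Fin n → ℝ) :
    Matrix (Fin n) (Fin n) ℝ :=
  1 - (matA h x)ᵀ * (matA h x * (matA h x)ᵀ)⁻¹ * matA h x

/-- `Q(x) = B(x)H(x)B(x)ᵀ − diag(g(x))`. -/
def matQ {n m k : ℕ} (h : Fin m → (Fin n → ℝ) → ℝ) (g : Fin k → (Fin n → ℝ) → ℝ)
    (x : Fin n → ℝ) : Matrix (Fin k) (Fin k) ℝ :=
  matB g x * matH h x * (matB g x)ᵀ - Matrix.diagonal (fun j => g j x)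

/-- Assumption (H1). -/
def hypH1 {n m k : ℕ} (θ : (Fin n → ℝ) → ℝ) (h : Fin m → (Fin n → ℝ) → ℝ)
    (g : Fin k → (Fin n → ℝ) → ℝ) : Prop :=
  (feas h g).Nonempty ∧ ∀ x₀ ∈ feas h g, IsCompact {x ∈ feas h g | θ x ≤ θ x₀}

/-- Assumption (H2). -/
def hypH2 {n m k : ℕ} (h : Fin m → (Fin n → ℝ) → ℝ) (g : Fin k → (Fin n → ℝ) → ℝ) : Prop :=
  ∀ x ∈ feas h g,
    LinearIndependent ℝ
      (Sum.elim (fun i : Fin m => grad (h i) x)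
        (fun j : {j : Fin k // g j x = 0} => grad (g (j : Fin k)) x))

/-- `P(x) = Q(x)⁻¹ B(x) H(x)`. -/
def matP {n m k : ℕ} (h : Fin m → (Fin n → ℝ) → ℝ) (g : Fin k → (Fin n → ℝ) → ℝ)
    (x : Fin n → ℝ) : Matrix (Fin k) (Fin n) ℝ :=
  (matQ h g x)⁻¹ * matB g x * matH h x

/-- `v(x) = P(x)(∇θ(x))ᵀ`. -/
def vecv {n m k : ℕ} (θ : (Fin n → ℝ) → ℝ) (h : Fin m → (Fin n → ℝ) → ℝ)
    (g : Fin k → (Fin n → ℝ) → ℝ) (x : Fin n → ℝ) : Fin k → ℝ :=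
  (matP h g x).mulVec (grad θ x)

/-- componentwise positive part. -/
def pPart {k : ℕ} (w : Fin k → ℝ) : Fin k → ℝ := fun j => max 0 (w j)

/-- `R₃(x)`. -/
def matR3 {n k : ℕ} (b c : Fin k → (Fin n → ℝ) → ℝ) (p : Fin k → ℕ) (x : Fin n → ℝ)
    (v : Fin k → ℝ) : Matrix (Fin k) (Fin k) ℝ :=
  Matrix.diagonal (fun j => b j x + c j x * (max 0 (v j)) ^ (2 * p j))

/-- The vector field `F(x)` of (2.4), (2.5). -/
def vecF {n m k : ℕ} (θ : (Fin n → ℝ) → ℝ) (h : Fin m → (Fin n → ℝ) → ℝ)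
    (g : Fin k → (Fin n → ℝ) → ℝ)
    (R1 : (Fin n → ℝ) → Matrix (Fin n) (Fin n) ℝ)
    (R2 : (Fin n → ℝ) → Matrix (Fin k) (Fin k) ℝ)
    (a b c : Fin k → (Fin n → ℝ) → ℝ) (p : Fin k → ℕ) (x : Fin n → ℝ) : Fin n → ℝ :=
  -(((matH h x - (matP h g x)ᵀ * matQ h g x * matP h g x) * R1 x *
      (matH h x - (matP h g x)ᵀ * matQ h g x * matP h g x)).mulVec (grad θ x))
  - ((matP h g x)ᵀ * Matrix.diagonal (fun j => g j x) *
      (R2 x * Matrix.diagonal (fun j => g j x) - Matrix.diagonal (fun j => a j x))).mulVec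
        (vecv θ h g x)
  - ((matP h g x)ᵀ * matR3 b c p x (vecv θ h g x)).mulVec (pPart (vecv θ h g x))

/-- The set `Φ` of KKT points. -/
def KKTset {n m k : ℕ} (θ : (Fin n → ℝ) → ℝ) (h : Fin m → (Fin n → ℝ) → ℝ)
    (g : Fin k → (Fin n → ℝ) → ℝ) : Set (Fin n → ℝ) :=
  {x | x ∈ feas h g ∧ ∃ (lam : Fin m → ℝ) (mu : Fin k → ℝ),
    (∀ j, 0 ≤ mu j) ∧
    grad θ x + (∑ i, lam i • grad (h i) x) + (∑ j, mu j • grad (g j) x) = 0 ∧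
    (∑ j, mu j * g j x) = 0}



-- ===== auxiliary lemmas =====

lemma aux_dot {p q : ℕ} (N : Matrix (Fin p) (Fin q) ℝ) (v : Fin q → ℝ) :
    v ⬝ᵥ (Nᵀ * N) *ᵥ v = (N *ᵥ v) ⬝ᵥ (N *ᵥ v) := by
  rw [← mulVec_mulVec, dotProduct_mulVec, vecMul_transpose]

lemma aux_dot_nonneg {q : ℕ} (w : Fin q → ℝ) : 0 ≤ w ⬝ᵥ w :=
  Finset.sum_nonneg fun _ _ => mul_self_nonneg _

section AuxLemmas

variable {n m k : ℕ} (h : Fin m → (Fin n → ℝ) → ℝ) (g : Fin k → (Fin n → ℝ) → ℝ)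
  (x : Fin n → ℝ)

lemma matA_transpose_mulVec (z : Fin m → ℝ) (r : Fin n) :
    ((matA h x)ᵀ *ᵥ z) r = ∑ i, z i * grad (h i) x r := by
  simp [Matrix.mulVec, dotProduct, matA, mul_comm]

lemma matB_transpose_mulVec (z : Fin k → ℝ) (r : Fin n) :
    ((matB g x)ᵀ *ᵥ z) r = ∑ j, z j * grad (g j) x r := by
  simp [Matrix.mulVec, dotProduct, matB, mul_comm]

lemma matH_mul_At (hAAt : IsUnit ((matA h x) * (matA h x)ᵀ).det) :
    matH h x * (matA h x)ᵀ = 0 := by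
  unfold matH
  rw [Matrix.sub_mul, Matrix.one_mul]
  simp only [Matrix.mul_assoc]
  rw [Matrix.nonsing_inv_mul _ hAAt, Matrix.mul_one, sub_self]

lemma matH_symm : (matH h x)ᵀ = matH h x := by
  unfold matH
  have e : ((matA h x) * (matA h x)ᵀ)ᵀ = (matA h x) * (matA h x)ᵀ := by
    rw [Matrix.transpose_mul, Matrix.transpose_transpose]
  rw [Matrix.transpose_sub, Matrix.transpose_one, Matrix.transpose_mul, Matrix.transpose_mul,
    Matrix.transpose_transpose, Matrix.transpose_nonsing_inv, e, Matrix.mul_assoc]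

lemma matH_idem (hAAt : IsUnit ((matA h x) * (matA h x)ᵀ).det) :
    matH h x * matH h x = matH h x := by
  have e : matH h x * ((matA h x)ᵀ * ((matA h x) * (matA h x)ᵀ)⁻¹ * matA h x) = 0 := by
    simp only [← Matrix.mul_assoc]
    rw [matH_mul_At h x hAAt, Matrix.zero_mul, Matrix.zero_mul]
  calc matH h x * matH h x
      = matH h x * 1 - matH h x * ((matA h x)ᵀ * ((matA h x) * (matA h x)ᵀ)⁻¹ * matA h x) := by
        rw [← Matrix.mul_sub]; rfl
    _ = matH h x := by rw [e, Matrix.mul_one, sub_zero]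

lemma matQ_symm : (matQ h g x)ᵀ = matQ h g x := by
  unfold matQ
  rw [Matrix.transpose_sub, Matrix.diagonal_transpose, Matrix.transpose_mul,
    Matrix.transpose_mul, Matrix.transpose_transpose, matH_symm, Matrix.mul_assoc]

lemma matBHB (hAAt : IsUnit ((matA h x) * (matA h x)ᵀ).det) :
    matB g x * matH h x * (matB g x)ᵀ
      = (matH h x * (matB g x)ᵀ)ᵀ * (matH h x * (matB g x)ᵀ) := by
  rw [Matrix.transpose_mul, Matrix.transpose_transpose, matH_symm]
  conv_rhs => rw [← Matrix.mul_assoc, Matrix.mul_assoc (matB g x) (matH h x) (matH h x),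
    matH_idem h x hAAt]

lemma ker_H (hx : x ∈ feas h g) (hli : LinearIndependent ℝ
      (Sum.elim (fun i : Fin m => grad (h i) x)
        (fun j : {j : Fin k // g j x = 0} => grad (g (j : Fin k)) x)))
    (z : Fin k → ℝ) (hz0 : ∀ j, g j x ≠ 0 → z j = 0)
    (hker : matH h x *ᵥ ((matB g x)ᵀ *ᵥ z) = 0) : z = 0 := by
  classical
  set u : Fin m → ℝ :=
    ((((matA h x) * (matA h x)ᵀ)⁻¹ * matA h x) *ᵥ ((matB g x)ᵀ *ᵥ z)) with hu
  have hBA : (matB g x)ᵀ *ᵥ z = (matA h x)ᵀ *ᵥ u := by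
    have e : (1 - (matA h x)ᵀ * ((matA h x) * (matA h x)ᵀ)⁻¹ * matA h x)
        *ᵥ ((matB g x)ᵀ *ᵥ z) = 0 := hker
    rw [Matrix.sub_mulVec, Matrix.one_mulVec] at e
    have e2 := eq_of_sub_eq_zero e
    rw [e2, hu, Matrix.mul_assoc, ← Matrix.mulVec_mulVec]
  have hsum : ∑ i, u i • grad (h i) x = ∑ j, z j • grad (g j) x := by
    funext r
    have := congrFun hBA r
    rw [matB_transpose_mulVec, matA_transpose_mulVec] at this
    simpa [Finset.sum_apply, smul_eq_mul] using this.symm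
  have hactive : ∑ j : {j : Fin k // g j x = 0}, z (j : Fin k) • grad (g (j : Fin k)) x
      = ∑ j, z j • grad (g j) x := by
    rw [← Finset.sum_subtype (Finset.univ.filter fun j => g j x = 0)
      (by simp) (fun j => z j • grad (g j) x)]
    exact Finset.sum_filter_of_ne (fun j _ hne => by
      by_contra hq
      exact hne (by rw [hz0 j hq, zero_smul]))
  have hc : ∀ s, Sum.elim u (fun j : {j : Fin k // g j x = 0} => -(z (j : Fin k))) s = 0 := by
    apply Fintype.linearIndependent_iff.mp hli
    rw [Fintype.sum_sum_type]
    simp only [Sum.elim_inl, Sum.elim_inr, neg_smul]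
    rw [Finset.sum_neg_distrib, hactive, hsum, add_neg_cancel]
  funext j
  by_cases hgj : g j x = 0
  · have := hc (Sum.inr ⟨j, hgj⟩)
    simp only [Sum.elim_inr, neg_eq_zero] at this
    simpa using this
  · simpa using hz0 j hgj

lemma matQ_det (hx : x ∈ feas h g) (hli : LinearIndependent ℝ
      (Sum.elim (fun i : Fin m => grad (h i) x)
        (fun j : {j : Fin k // g j x = 0} => grad (g (j : Fin k)) x)))
    (hAAt : IsUnit ((matA h x) * (matA h x)ᵀ).det) :
    IsUnit (matQ h g x).det := by
  classical
  rw [isUnit_iff_ne_zero]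
  intro hdet
  obtain ⟨v, hv0, hv⟩ := Matrix.exists_mulVec_eq_zero_iff.mpr hdet
  have hdot : v ⬝ᵥ (matQ h g x) *ᵥ v = 0 := by rw [hv, dotProduct_zero]
  have e1 : v ⬝ᵥ (matB g x * matH h x * (matB g x)ᵀ) *ᵥ v
      = ((matH h x * (matB g x)ᵀ) *ᵥ v) ⬝ᵥ ((matH h x * (matB g x)ᵀ) *ᵥ v) := by
    rw [matBHB h g x hAAt, aux_dot]
  have e2 : v ⬝ᵥ (Matrix.diagonal fun j => g j x) *ᵥ v = ∑ j, g j x * (v j * v j) := by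
    simp only [dotProduct, Matrix.mulVec_diagonal]
    exact Finset.sum_congr rfl fun j _ => by ring
  unfold matQ at hdot
  rw [Matrix.sub_mulVec, dotProduct_sub, e1, e2] at hdot
  have h1 : 0 ≤ ((matH h x * (matB g x)ᵀ) *ᵥ v) ⬝ᵥ ((matH h x * (matB g x)ᵀ) *ᵥ v) :=
    aux_dot_nonneg _
  have h2 : ∀ j ∈ Finset.univ, 0 ≤ -(g j x * (v j * v j)) := fun j _ => by
    have := hx.2 j
    nlinarith [mul_self_nonneg (v j)]
  have hsle : ∑ j, g j x * (v j * v j) ≤ 0 := by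
    have := Finset.sum_nonneg h2
    rw [Finset.sum_neg_distrib] at this
    linarith
  have hN : (matH h x * (matB g x)ᵀ) *ᵥ v = 0 :=
    dotProduct_self_eq_zero.mp (le_antisymm (by linarith) h1)
  have hsz : ∑ j, g j x * (v j * v j) = 0 := by
    rw [hN] at hdot; simpa using hdot.symm
  have hgz : ∀ j, g j x * (v j * v j) = 0 := by
    intro j
    have := (Finset.sum_eq_zero_iff_of_nonneg h2).mp
      (by rw [Finset.sum_neg_distrib, hsz, neg_zero]) j (Finset.mem_univ j)
    linarith
  have hz0 : ∀ j, g j x ≠ 0 → v j = 0 := by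
    intro j hj
    rcases mul_eq_zero.mp (hgz j) with h' | h'
    · exact absurd h' hj
    · rcases mul_eq_zero.mp h' with h'' | h'' <;> exact h''
  exact hv0 (ker_H h g x hx hli v hz0 (by rw [← Matrix.mulVec_mulVec] at hN; exact hN))

end AuxLemmas

/-- Every KKT point is an equilibrium of the vector field: `x ∈ Φ → F(x) = 0`. -/
theorem stmt_10
    {n m k : ℕ} (hmn : m < n)
    (θ : (Fin n → ℝ) → ℝ) (h : Fin m → (Fin n → ℝ) → ℝ) (g : Fin k → (Fin n → ℝ) → ℝ)
    (hθ : ContDiff ℝ 2 θ) (hhC : ∀ i, ContDiff ℝ 2 (h i)) (hgC : ∀ j, ContDiff ℝ 2 (g j))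
    (hH1 : hypH1 θ h g) (hH2 : hypH2 h g)
    (R1 : (Fin n → ℝ) → Matrix (Fin n) (Fin n) ℝ)
    (R2 : (Fin n → ℝ) → Matrix (Fin k) (Fin k) ℝ)
    (a b c : Fin k → (Fin n → ℝ) → ℝ) (p : Fin k → ℕ)
    (hR1C : ∀ i j, ContDiff ℝ 1 fun x => R1 x i j)
    (hR1pd : ∀ x, (R1 x).PosDef)
    (hR2C : ∀ i j, ContDiff ℝ 1 fun x => R2 x i j)
    (hR2psd : ∀ x, (R2 x).PosSemidef)
    (haC : ∀ j, ContDiff ℝ 1 (a j)) (hbC : ∀ j, ContDiff ℝ 1 (b j))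
    (hcC : ∀ j, ContDiff ℝ 1 (c j))
    (ha0 : ∀ j x, 0 ≤ a j x) (hb0 : ∀ j x, 0 ≤ b j x) (hc0 : ∀ j x, 0 ≤ c j x)
    (hbc : ∀ x ∈ feas h g, ∀ j, 0 < b j x + c j x)
    (hpd : ∀ x ∈ feas h g, (R2 x).PosDef ∨ (Matrix.diagonal fun j => a j x).PosDef)
    (hp : ∀ j, 1 ≤ p j) :
    ∀ x ∈ KKTset θ h g, vecF θ h g R1 R2 a b c p x = 0 := by
  classical
  intro x hxK
  obtain ⟨hxS, lam, mu, hmu0, hstat, hcomp⟩ := hxK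
  have hli := hH2 x hxS
  -- linear independence of rows of A
  have liA : LinearIndependent ℝ (fun i : Fin m => grad (h i) x) := by
    have := hli.comp Sum.inl Sum.inl_injective
    simpa using this
  -- A Aᵀ is invertible
  have hAAt : IsUnit ((matA h x) * (matA h x)ᵀ).det := by
    rw [isUnit_iff_ne_zero]
    intro hdet
    obtain ⟨v, hv0, hv⟩ := Matrix.exists_mulVec_eq_zero_iff.mpr hdet
    have h1 : (matA h x)ᵀ *ᵥ v = 0 := by
      have hd : v ⬝ᵥ ((matA h x) * (matA h x)ᵀ) *ᵥ v = 0 := by rw [hv, dotProduct_zero]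
      have e : (matA h x) * (matA h x)ᵀ = ((matA h x)ᵀ)ᵀ * (matA h x)ᵀ := by
        rw [Matrix.transpose_transpose]
      rw [e, aux_dot] at hd
      exact dotProduct_self_eq_zero.mp hd
    apply hv0
    have hsum : ∑ i, v i • grad (h i) x = 0 := by
      funext r
      have := congrFun h1 r
      rw [matA_transpose_mulVec] at this
      simpa [Finset.sum_apply, smul_eq_mul] using this
    exact funext fun i => Fintype.linearIndependent_iff.mp liA v hsum i
  have hQdet : IsUnit (matQ h g x).det := matQ_det h g x hxS hli hAAt
  have hQQi : matQ h g x * (matQ h g x)⁻¹ = 1 := Matrix.mul_nonsing_inv _ hQdet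
  have hQiQ : (matQ h g x)⁻¹ * matQ h g x = 1 := Matrix.nonsing_inv_mul _ hQdet
  have hHA := matH_mul_At h x hAAt
  -- componentwise complementarity
  have hcompj : ∀ j, mu j * g j x = 0 := by
    intro j
    have hnn : ∀ i ∈ Finset.univ, (0:ℝ) ≤ -(mu i * g i x) := fun i _ => by
      have h1 := hmu0 i; have h2 := hxS.2 i; nlinarith
    have hs : ∑ i, -(mu i * g i x) = 0 := by
      rw [Finset.sum_neg_distrib, hcomp, neg_zero]
    have := (Finset.sum_eq_zero_iff_of_nonneg hnn).mp hs j (Finset.mem_univ j)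
    linarith
  -- stationarity as a matrix equation
  have hstat' : grad θ x = -((matA h x)ᵀ *ᵥ lam) - ((matB g x)ᵀ *ᵥ mu) := by
    funext r
    have := congrFun hstat r
    simp only [Pi.add_apply, Finset.sum_apply, Pi.smul_apply, smul_eq_mul,
      Pi.zero_apply] at this
    simp only [Pi.sub_apply, Pi.neg_apply, matA_transpose_mulVec, matB_transpose_mulVec]
    linarith
  -- Q v = B H ∇θ
  have hQv : matQ h g x *ᵥ vecv θ h g x = (matB g x * matH h x) *ᵥ grad θ x := by
    show matQ h g x *ᵥ ((matP h g x) *ᵥ grad θ x) = _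
    rw [Matrix.mulVec_mulVec]
    congr 1
    unfold matP
    simp only [← Matrix.mul_assoc]
    rw [hQQi, Matrix.one_mul]
  -- v = -mu
  have hvmu : vecv θ h g x = -mu := by
    have hGmu : (Matrix.diagonal fun j => g j x) *ᵥ mu = 0 := by
      funext j
      rw [Matrix.mulVec_diagonal]
      rw [mul_comm]
      simpa using hcompj j
    have h0 : matQ h g x *ᵥ (vecv θ h g x + mu) = 0 := by
      rw [Matrix.mulVec_add, hQv, hstat']
      have e1 : (matB g x * matH h x) *ᵥ ((matA h x)ᵀ *ᵥ lam) = 0 := by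
        rw [Matrix.mulVec_mulVec, Matrix.mul_assoc, hHA, Matrix.mul_zero,
          Matrix.zero_mulVec]
      have e2 : matQ h g x *ᵥ mu = (matB g x * matH h x * (matB g x)ᵀ) *ᵥ mu := by
        unfold matQ
        rw [Matrix.sub_mulVec, hGmu, sub_zero]
      have e3 : (matB g x * matH h x) *ᵥ ((matB g x)ᵀ *ᵥ mu)
          = (matB g x * matH h x * (matB g x)ᵀ) *ᵥ mu := by
        rw [Matrix.mulVec_mulVec]
      rw [Matrix.mulVec_sub, Matrix.mulVec_neg, e1, e2, e3, neg_zero, zero_sub,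
        neg_add_cancel]
    have hinj : vecv θ h g x + mu = 0 := by
      have : ((matQ h g x)⁻¹ * matQ h g x) *ᵥ (vecv θ h g x + mu) = 0 := by
        rw [← Matrix.mulVec_mulVec, h0, Matrix.mulVec_zero]
      rwa [hQiQ, Matrix.one_mulVec] at this
    exact eq_neg_of_add_eq_zero_left hinj
  -- positive part of v vanishes
  have hpz : pPart (vecv θ h g x) = 0 := by
    funext j
    have : vecv θ h g x j = -(mu j) := by rw [hvmu]; rfl
    simp only [pPart, this, Pi.zero_apply]
    exact max_eq_left (neg_nonpos.mpr (hmu0 j))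
  -- Pᵀ Q = H Bᵀ
  have hPtQ : (matP h g x)ᵀ * matQ h g x = matH h x * (matB g x)ᵀ := by
    unfold matP
    rw [Matrix.transpose_mul, Matrix.transpose_mul, matH_symm,
      Matrix.transpose_nonsing_inv, matQ_symm]
    simp only [Matrix.mul_assoc]
    rw [hQiQ, Matrix.mul_one]
  -- first term vanishes
  have hM : (matH h x - (matP h g x)ᵀ * matQ h g x * matP h g x) *ᵥ grad θ x = 0 := by
    rw [Matrix.sub_mulVec, hPtQ]
    have e : (matH h x * (matB g x)ᵀ * matP h g x) *ᵥ grad θ x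
        = (matH h x * (matB g x)ᵀ) *ᵥ (-mu) := by
      rw [← Matrix.mulVec_mulVec]
      exact congrArg _ hvmu
    rw [e, hstat']
    have eHA : matH h x *ᵥ ((matA h x)ᵀ *ᵥ lam) = 0 := by
      rw [Matrix.mulVec_mulVec, hHA, Matrix.zero_mulVec]
    rw [Matrix.mulVec_sub, Matrix.mulVec_neg, Matrix.mulVec_neg, eHA,
      ← Matrix.mulVec_mulVec]
    abel
  -- second term vanishes
  have hGv : (Matrix.diagonal fun j => g j x) *ᵥ vecv θ h g x = 0 := by
    funext j
    rw [Matrix.mulVec_diagonal, hvmu]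
    have := hcompj j
    simp only [Pi.neg_apply, Pi.zero_apply]
    linear_combination (-1 : ℝ) * this
  have hT2 : ((matP h g x)ᵀ * Matrix.diagonal (fun j => g j x) *
      (R2 x * Matrix.diagonal (fun j => g j x) - Matrix.diagonal (fun j => a j x))) *ᵥ
        (vecv θ h g x) = 0 := by
    have inner : ((Matrix.diagonal fun j => g j x) *
        (R2 x * Matrix.diagonal (fun j => g j x) - Matrix.diagonal (fun j => a j x))) *ᵥ
          (vecv θ h g x) = 0 := by
      rw [Matrix.mul_sub, Matrix.sub_mulVec]
      have p1 : ((Matrix.diagonal fun j => g j x) * (R2 x * Matrix.diagonal fun j => g j x))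
          *ᵥ vecv θ h g x = 0 := by
        rw [← Matrix.mul_assoc, ← Matrix.mulVec_mulVec, hGv, Matrix.mulVec_zero]
      have p2 : ((Matrix.diagonal fun j => g j x) * Matrix.diagonal fun j => a j x)
          *ᵥ vecv θ h g x = 0 := by
        rw [Matrix.diagonal_mul_diagonal]
        funext j
        rw [Matrix.mulVec_diagonal, hvmu]
        have := hcompj j
        simp only [Pi.neg_apply, Pi.zero_apply]
        linear_combination (-(a j x) : ℝ) * this
      rw [p1, p2, sub_zero]
    rw [Matrix.mul_assoc, ← Matrix.mulVec_mulVec, inner, Matrix.mulVec_zero]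
  -- assemble
  unfold vecF
  rw [hpz, Matrix.mulVec_zero, hT2]
  have hfirst : ((matH h x - (matP h g x)ᵀ * matQ h g x * matP h g x) * R1 x *
      (matH h x - (matP h g x)ᵀ * matQ h g x * matP h g x)) *ᵥ grad θ x = 0 := by
    rw [← Matrix.mulVec_mulVec, ← Matrix.mulVec_mulVec, hM, Matrix.mulVec_zero,
      Matrix.mulVec_zero]
  rw [hfirst]
  simp


end
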